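/- Let f be a strongly hyperbolic function. Then liminf_{x→0+} f'(x)/f(x) = −∞; in particular, f'(x)/f(x) is unbounded below near 0. -/

import Mathlib

open Filter Set Real

/-- A strongly hyperbolic function `f : (0,∞) → (0,∞)`. -/
def StronglyHyperbolic (f : ℝ → ℝ) : Prop :=
  (∀ x ∈ Set.Ioi (0:ℝ), 0 < f x) ∧
  Filter.Tendsto f (nhdsWithin 0 (Set.Ioi 0)) Filter.atTop ∧
  Filter.Tendsto f Filter.atTop (nhds 0) ∧
  StrictConvexOn ℝ (Set.Ioi 0) f ∧
  (∀ b : ℝ, Filter.Tendsto (fun x => f (x + b) / f x) Filter.atTop (nhds 1)) ∧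
  (∀ x ∈ Set.Ioi (0:ℝ), DifferentiableAt ℝ f x) ∧
  StrictConvexOn ℝ (Set.Ioi 0) (fun x => Real.log |deriv f x|)

theorem stmt5 (f : ℝ → ℝ) (hf : StronglyHyperbolic f) :
    Filter.liminf (fun x => ((deriv f x / f x : ℝ) : EReal)) (nhdsWithin 0 (Set.Ioi 0)) = ⊥ ∧
    ∀ M : ℝ, ∃ᶠ x in nhdsWithin 0 (Set.Ioi 0), deriv f x / f x < M := by
  obtain ⟨hpos, h0, _, _, _, hdiff, _⟩ := hf
  have key : ∀ M : ℝ, ∃ᶠ x in nhdsWithin 0 (Set.Ioi 0), deriv f x / f x < M := by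
    intro M
    by_contra hc
    rw [Filter.not_frequently] at hc
    simp only [not_lt] at hc
    obtain ⟨u, hu, hsub⟩ := mem_nhdsGT_iff_exists_Ioo_subset.mp hc
    have hu0 : (0:ℝ) < u := hu
    set δ := u / 2 with hδ
    have hδ0 : 0 < δ := by positivity
    have hδu : δ < u := by simp [hδ]; linarith
    -- derivative of log ∘ f
    have hld : ∀ y ∈ Ioo (0:ℝ) u, HasDerivAt (fun z => Real.log (f z) - M * z)
        (deriv f y / f y - M) y := by
      intro y hy
      have hy0 : y ∈ Ioi (0:ℝ) := hy.1
      have hfy : 0 < f y := hpos y hy0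
      have h1 : HasDerivAt f (deriv f y) y := (hdiff y hy0).hasDerivAt
      have h2 : HasDerivAt (fun z => Real.log (f z)) (deriv f y / f y) y :=
        h1.log hfy.ne'
      have h3 := h2.sub ((hasDerivAt_id' y).const_mul M)
      rw [mul_one] at h3
      exact h3
    -- monotonicity bound: for x ∈ Ioo 0 δ, log (f x) ≤ log (f δ) + |M| * δ
    have bound : ∀ x ∈ Ioo (0:ℝ) δ, Real.log (f x) ≤ Real.log (f δ) + |M| * δ := by
      intro x hx
      have hxδ : x < δ := hx.2
      have hmono : MonotoneOn (fun z => Real.log (f z) - M * z) (Icc x δ) := by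
        apply monotoneOn_of_deriv_nonneg (convex_Icc x δ)
        · intro y hy
          have hy' : y ∈ Ioo (0:ℝ) u := ⟨lt_of_lt_of_le hx.1 hy.1, lt_of_le_of_lt hy.2 hδu⟩
          exact ((hld y hy').continuousAt).continuousWithinAt
        · intro y hy
          rw [interior_Icc] at hy
          have hy' : y ∈ Ioo (0:ℝ) u := ⟨hx.1.trans hy.1, hy.2.trans hδu⟩
          exact ((hld y hy').differentiableAt).differentiableWithinAt
        · intro y hy
          rw [interior_Icc] at hy
          have hy' : y ∈ Ioo (0:ℝ) u := ⟨hx.1.trans hy.1, hy.2.trans hδu⟩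
          rw [(hld y hy').deriv]
          have : M ≤ deriv f y / f y := hsub hy'
          linarith
      have := hmono (left_mem_Icc.mpr hxδ.le) (right_mem_Icc.mpr hxδ.le) hxδ.le
      have habs : M * x - M * δ ≤ |M| * δ := by
        have h1 : M * x - M * δ = M * (x - δ) := by ring
        have h2 : M * (x - δ) ≤ |M * (x - δ)| := le_abs_self _
        have h3 : |M * (x - δ)| = |M| * |x - δ| := abs_mul _ _
        have h4 : |x - δ| ≤ δ := by
          rw [abs_sub_comm, abs_of_nonneg (by linarith : (0:ℝ) ≤ δ - x)]; linarith [hx.1]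
        nlinarith [abs_nonneg M]
      dsimp at this
      linarith
    -- contradiction with f → ∞
    have hB : ∀ᶠ x in nhdsWithin 0 (Set.Ioi 0),
        Real.exp (Real.log (f δ) + |M| * δ) < f x :=
      h0.eventually (eventually_gt_atTop _)
    have hmem : Ioo (0:ℝ) δ ∈ nhdsWithin 0 (Set.Ioi 0) :=
      mem_nhdsGT_iff_exists_Ioo_subset.mpr ⟨δ, hδ0, subset_rfl⟩
    obtain ⟨x, hx1, hx2⟩ := (hB.and hmem).exists
    have hfx : 0 < f x := hpos x hx2.1
    have := bound x hx2
    have h5 : f x ≤ Real.exp (Real.log (f δ) + |M| * δ) := by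
      have := Real.exp_le_exp.mpr this
      rwa [Real.exp_log hfx] at this
    linarith
  refine ⟨?_, key⟩
  rw [EReal.eq_bot_iff_forall_lt]
  intro y
  refine lt_of_le_of_lt (Filter.liminf_le_of_frequently_le' (x := ((y - 1 : ℝ) : EReal)) ?_)
    (by exact_mod_cast EReal.coe_lt_coe_iff.mpr (by linarith))
  exact (key (y - 1)).mono
    (fun x hx => le_of_lt (by exact_mod_cast EReal.coe_lt_coe_iff.mpr hx))
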